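/- Let w[a..b] and w[c..d] be intersecting palindromic factors of w with a ≤ c ≤ b ≤ d, neither a proper factor of the other, and suppose w[a..b] does not contain the centre of w[c..d] (i.e., b < (c+d)/2). Then w[a..d] is a factor of (ps)^ω where p is the palindrome w[a..b] and s is the palindrome w[b+1..c+d-b-1]; in particular w[a..d] is a palindromic periodicity whose half-period equals the distance between the two centres. -/
import Mathlib


/-- Two intersecting palindromic factors `w[a..b]` and `w[c..d]` with
`a ≤ c ≤ b ≤ d`, neither a proper factor of the other, where `w[a..b]` does not
contain the centre of `w[c..d]` (`2b < c + d`).  Then, with `p = w[a..b]` and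
`s = w[b+1..c+d-b-1]`: `s` is a palindrome, `|ps| = (c+d)-(a+b)` is at most the
length of `w[a..d]`, and `w[a..d]` is a (prefix-aligned) factor of `(ps)^ω`;
i.e. `w[a..d]` is a palindromic periodicity whose half-period is the distance
between the two centres. -/
theorem stmt_12 {α : Type*} (w : ℕ → α) (a b c d : ℕ)
    (hpal1 : ∀ i j, a ≤ i → a ≤ j → i + j = a + b → w i = w j)
    (hpal2 : ∀ i j, c ≤ i → c ≤ j → i + j = c + d → w i = w j)
    (hac : a ≤ c) (hcb : c ≤ b) (hbd : b ≤ d)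
    (hb2 : 2 * b < c + d) :
    (∀ i j, b + 1 ≤ i → b + 1 ≤ j → i + j = c + d → w i = w j) ∧
    ((c + d) - (a + b) ≤ d - a + 1) ∧
    (∀ i, a ≤ i → i ≤ d → w i = w (a + (i - a) % ((c + d) - (a + b)))) := by
  have hT : (c + d) - (a + b) = c + d - a - b := by omega
  refine ⟨fun i j hi hj hij => hpal2 i j (by omega) (by omega) hij, by omega, ?_⟩
  set T := (c + d) - (a + b) with hTdef
  have key : ∀ i, a + T ≤ i → i ≤ d → w i = w (i - T) := by
    intro i h1 h2
    have e1 : w i = w (c + d - i) := hpal2 i (c + d - i) (by omega) (by omega) (by omega)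
    have e2 : w (c + d - i) = w (i - T) :=
      hpal1 (c + d - i) (i - T) (by omega) (by omega) (by omega)
    exact e1.trans e2
  intro i
  induction i using Nat.strong_induction_on with
  | _ i ih =>
    intro hai hid
    by_cases h : i - a < T
    · rw [Nat.mod_eq_of_lt h]
      congr 1
      omega
    · rw [key i (by omega) hid, ih (i - T) (by omega) (by omega) (by omega)]
      congr 2
      have : i - a = (i - T - a) + T := by omega
      rw [this, Nat.add_mod_right]
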